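/- arXiv:2006.12702 — 3 statements merged into one kernel-verified Lean document; each statement's English description precedes it below -/
import Mathlib

section
/- Let f : X → Y be a continuous bijection of topological spaces, where Y is Hausdorff and carries a continuous action of a finite group G, and X carries a continuous G-action making f equivariant. If f sends G-invariant open subsets of X to open subsets of Y, then f is an open map, hence a homeomorphism. -/
open scoped Pointwise
/-- A continuous equivariant bijection f : X → Y (Y Hausdorff, G finite)
which sends G-invariant open sets to open sets is an open map, hence a homeomorphism. -/
theorem stmt4 {G X Y : Type*} [Group G] [Finite G]
    [TopologicalSpace X] [TopologicalSpace Y] [T2Space Y]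
    [MulAction G X] [ContinuousConstSMul G X]
    [MulAction G Y] [ContinuousConstSMul G Y]
    (f : X → Y) (hc : Continuous f) (hb : Function.Bijective f)
    (heq : ∀ (g : G) (x : X), f (g • x) = g • f x)
    (hop : ∀ U : Set X, IsOpen U → (∀ g : G, g • U = U) → IsOpen (f '' U)) :
    IsOpenMap f ∧ IsHomeomorph f := by
  have hopen : IsOpenMap f := by
    intro U hU
    rw [isOpen_iff_forall_mem_open]
    rintro y ⟨x, hxU, rfl⟩
    -- separate f x from the other points of its orbit
    have hsep : ∀ g : G, ∃ A B : Set Y, IsOpen A ∧ IsOpen B ∧ f x ∈ A ∧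
        g • f x ∈ B ∧ (g • f x ≠ f x → Disjoint A B) := by
      intro g
      by_cases hg : g • f x = f x
      · exact ⟨Set.univ, Set.univ, isOpen_univ, isOpen_univ, trivial, trivial,
          fun h => absurd hg h⟩
      · obtain ⟨A, B, hA, hB, hfA, hfB, hd⟩ := t2_separation (Ne.symm hg)
        exact ⟨A, B, hA, hB, hfA, hfB, fun _ => hd⟩
    choose A B hA hB hfA hfB hdis using hsep
    set U₁ : Set Y := ⋂ g : G, (A g ∩ g⁻¹ • B g) with hU₁def
    have hU₁ : IsOpen U₁ := isOpen_iInter_of_finite fun g => (hA g).inter ((hB g).smul g⁻¹)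
    have hfxU₁ : f x ∈ U₁ := by
      refine Set.mem_iInter.2 fun g => ⟨hfA g, ?_⟩
      rw [Set.mem_smul_set_iff_inv_smul_mem, inv_inv]
      exact hfB g
    have hdisj : ∀ g : G, g • f x ≠ f x → Disjoint U₁ (g • U₁) := by
      intro g hg
      refine Set.disjoint_of_subset ?_ ?_ (hdis g hg)
      · exact (Set.iInter_subset _ g).trans Set.inter_subset_left
      · intro y hy
        obtain ⟨z, hz, rfl⟩ := hy
        have hz' : z ∈ g⁻¹ • B g := (Set.mem_iInter.1 hz g).2
        obtain ⟨b, hbmem, rfl⟩ := hz'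
        simpa [smul_inv_smul] using hbmem
    -- the H-invariant neighborhood V of x
    set H := MulAction.stabilizer G x with hHdef
    set W : Set X := U ∩ f ⁻¹' U₁ with hWdef
    have hW : IsOpen W := hU.inter (hU₁.preimage hc)
    set V : Set X := ⋂ h : H, (h : G) • W with hVdef
    have hV : IsOpen V := isOpen_iInter_of_finite fun h => hW.smul _
    have hxV : x ∈ V := by
      refine Set.mem_iInter.2 fun h => ?_
      rw [Set.mem_smul_set_iff_inv_smul_mem]
      have : (h : G)⁻¹ • x = x := by
        rw [inv_smul_eq_iff]; exact h.2.symm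
      rw [this]
      exact ⟨hxU, hfxU₁⟩
    have hVW : V ⊆ W := by
      intro v hv
      have := Set.mem_iInter.1 hv 1
      simpa using this
    have hVinv : ∀ h : G, h ∈ H → ∀ v ∈ V, h • v ∈ V := by
      intro h hh v hv
      refine Set.mem_iInter.2 fun h' => ?_
      rw [Set.mem_smul_set_iff_inv_smul_mem, smul_smul]
      have key := Set.mem_iInter.1 hv ((⟨h, hh⟩ : H)⁻¹ * h')
      rw [Set.mem_smul_set_iff_inv_smul_mem] at key
      have : ((((⟨h, hh⟩ : H)⁻¹ * h') : H) : G)⁻¹ = (h' : G)⁻¹ * h := by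
        push_cast
        group
      rwa [this] at key
    -- the invariant open set generated by V
    set GV : Set X := ⋃ g : G, g • V with hGVdef
    have hGVopen : IsOpen GV := isOpen_iUnion fun g => hV.smul g
    have hGVinv : ∀ g : G, g • GV = GV := by
      intro g
      rw [hGVdef, Set.smul_set_iUnion]
      apply Set.Subset.antisymm
      · refine Set.iUnion_subset fun g' => ?_
        rw [smul_smul]
        exact Set.subset_iUnion (fun k : G => k • V) (g * g')
      · refine Set.iUnion_subset fun g' => ?_
        have : g' • V = g • (g⁻¹ * g') • V := by rw [smul_smul, mul_inv_cancel_left]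
        rw [this]
        exact Set.subset_iUnion (fun k : G => g • k • V) (g⁻¹ * g')
    have hfGV : IsOpen (f '' GV) := hop GV hGVopen hGVinv
    -- key identity
    have hkey : f '' V = f '' GV ∩ U₁ := by
      apply Set.Subset.antisymm
      · rintro _ ⟨v, hv, rfl⟩
        refine ⟨⟨v, ?_, rfl⟩, (hVW hv).2⟩
        exact Set.mem_iUnion.2 ⟨1, by simpa using hv⟩
      · rintro y ⟨⟨z, hz, rfl⟩, hyU₁⟩
        obtain ⟨g, v, hv, rfl⟩ : ∃ g : G, ∃ v ∈ V, g • v = z := by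
          obtain ⟨g, hg⟩ := Set.mem_iUnion.1 hz
          obtain ⟨v, hv, rfl⟩ := hg
          exact ⟨g, v, hv, rfl⟩
        have hfv : f v ∈ U₁ := (hVW hv).2
        have hmem : f (g • v) ∈ g • U₁ := by
          rw [heq]
          exact ⟨f v, hfv, rfl⟩
        have hgfx : g • f x = f x := by
          by_contra hne
          exact (hdisj g hne).ne_of_mem hyU₁ hmem rfl
        have hgx : g ∈ H := by
          have : f (g • x) = f x := by rw [heq, hgfx]
          exact hb.1 this
        exact ⟨g • v, hVinv g hgx v hv, rfl⟩
    refine ⟨f '' GV ∩ U₁, ?_, hfGV.inter hU₁, ?_⟩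
    · rw [← hkey]
      exact Set.image_mono fun v hv => (hVW hv).1
    · rw [← hkey]
      exact ⟨x, hxV, rfl⟩
  exact ⟨hopen, hc, hopen, hb⟩
end

section
/- Let X₀ ↪ X₁ ↪ X₂ ↪ ⋯ be a sequence of closed inclusions of Hausdorff topological spaces such that each inclusion X_i ↪ X_{i+1} is a mapping cylinder inclusion (i.e., factors as X_i ↪ X_i ∪_A (A × ℝ_{≥0}) ↪ X_{i+1} with the second map an open inclusion, for some map A → X_i). Then the colimit X = colim_i X_i (in topological spaces) is Hausdorff. -/
open CategoryTheory CategoryTheory.Limits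

/-- The relation defining the half-infinite mapping cylinder of `g : A → X`:
glue `A × {0}` to `X` along `g`. -/
def CylRel {A X : Type} (g : A → X) :
    (X ⊕ A × {r : ℝ // 0 ≤ r}) → (X ⊕ A × {r : ℝ // 0 ≤ r}) → Prop :=
  fun p q => ∃ a : A, p = Sum.inl (g a) ∧ q = Sum.inr (a, ⟨0, le_refl 0⟩)

/-- The open half-infinite mapping cylinder `X ∪_A (A × ℝ_{≥0})` of `g : A → X`. -/
def Cyl {A X : Type} (g : A → X) : Type := Quot (CylRel g)

instance {A X : Type} [TopologicalSpace A] [TopologicalSpace X] (g : A → X) :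
    TopologicalSpace (Cyl g) :=
  instTopologicalSpaceQuot

/-- The inclusion of `X` into the mapping cylinder of `g : A → X`. -/
def cylIncl {A X : Type} (g : A → X) : X → Cyl g := fun x => Quot.mk _ (Sum.inl x)

/-- The saturated set in the cylinder source corresponding to `U`. -/
def cylSat {A X : Type} (g : A → X) (U : Set X) : Set (X ⊕ A × {r : ℝ // 0 ≤ r}) :=
  Sum.elim (fun x => x ∈ U) (fun q => g q.1 ∈ U)

lemma cylSat_mem_iff {A X : Type} (g : A → X) (U : Set X)
    {p q : X ⊕ A × {r : ℝ // 0 ≤ r}} (h : Relation.EqvGen (CylRel g) p q) :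
    p ∈ cylSat g U ↔ q ∈ cylSat g U := by
  induction h with
  | rel p q hpq => obtain ⟨a, rfl, rfl⟩ := hpq; exact Iff.rfl
  | refl => rfl
  | symm _ _ _ ih => exact ih.symm
  | trans _ _ _ _ _ ih1 ih2 => exact ih1.trans ih2

lemma cylSat_saturated {A X : Type} (g : A → X) (U : Set X) :
    Quot.mk (CylRel g) ⁻¹' (Quot.mk (CylRel g) '' cylSat g U) = cylSat g U := by
  ext p
  constructor
  · rintro ⟨q, hq, heq⟩
    exact (cylSat_mem_iff g U (Quot.eq.mp heq)).mp hq
  · intro hp; exact ⟨p, hp, rfl⟩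

lemma cylSat_isOpen {A X : Type} [TopologicalSpace A] [TopologicalSpace X] {g : A → X}
    (hg : Continuous g) {U : Set X} (hU : IsOpen U) : IsOpen (cylSat g U) := by
  rw [isOpen_sum_iff]
  constructor
  · exact hU
  · exact (hg.comp (continuous_fst)).isOpen_preimage U hU

lemma cyl_step {A X Y : Type} [TopologicalSpace A] [TopologicalSpace X] [TopologicalSpace Y]
    {g : A → X} (hg : Continuous g) {j : Cyl g → Y} (hjo : Topology.IsOpenEmbedding j)
    {f : X → Y} (hf : ∀ x, j (cylIncl g x) = f x)
    (U V : Set X) (hU : IsOpen U) (hV : IsOpen V) (hd : Disjoint U V) :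
    ∃ U' V' : Set Y, IsOpen U' ∧ IsOpen V' ∧ Disjoint U' V' ∧
      f ⁻¹' U' = U ∧ f ⁻¹' V' = V := by
  let ext : Set X → Set Y := fun W => j '' (Quot.mk (CylRel g) '' cylSat g W)
  have hopen : ∀ (W : Set X), IsOpen W → IsOpen (ext W) := by
    intro W hW
    apply hjo.isOpenMap
    exact (isQuotientMap_quot_mk (r := CylRel g)).isOpen_preimage.mp
      (by have e := cylSat_saturated g W; exact e.symm ▸ cylSat_isOpen hg hW)
  have hpre : ∀ (W : Set X), f ⁻¹' ext W = W := by
    intro W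
    ext x
    constructor
    · rintro ⟨c, hc, hcx⟩
      rw [← hf x] at hcx
      have : c = cylIncl g x := hjo.injective hcx
      subst this
      have hmem : (Sum.inl x : X ⊕ A × {r : ℝ // 0 ≤ r}) ∈ Quot.mk (CylRel g) ⁻¹' (Quot.mk (CylRel g) '' cylSat g W) := hc
      rw [cylSat_saturated] at hmem
      exact hmem
    · intro hx
      exact ⟨cylIncl g x, ⟨Sum.inl x, hx, rfl⟩, hf x⟩
  refine ⟨ext U, ext V, hopen U hU, hopen V hV, ?_, hpre U, hpre V⟩
  rw [Set.disjoint_left]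
  rintro y ⟨c, hc, rfl⟩ ⟨c', hc', hcc⟩
  have : c' = c := hjo.injective hcc
  subst this
  obtain ⟨p, hp, rfl⟩ := hc
  have hp' : p ∈ cylSat g V := by
    have hmem : p ∈ Quot.mk (CylRel g) ⁻¹' (Quot.mk (CylRel g) '' cylSat g V) := hc'
    rw [cylSat_saturated] at hmem
    exact hmem
  cases p with
  | inl x => exact Set.disjoint_left.mp hd hp hp'
  | inr q => exact Set.disjoint_left.mp hd hp hp'

section
variable (F : ℕ ⥤ TopCat.{0})

/-- openness criterion in the colimit -/
lemma isOpen_colimit (S : Set ↥(colimit F)) (h : ∀ n, IsOpen ((colimit.ι F n) ⁻¹' S)) :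
    IsOpen S := by
  let c : Cocone F :=
  { pt := TopCat.of Prop
    ι :=
    { app := fun n => TopCat.ofHom ⟨fun z => colimit.ι F n z ∈ S, isOpen_iff_continuous_mem.mp (h n)⟩
      naturality := by
        intro a b f
        ext z
        have : colimit.ι F b (F.map f z) = colimit.ι F a z := by
          rw [← comp_apply, colimit.w]
        show ((colimit.ι F b) ((F.map f) z) ∈ S) = ((colimit.ι F a) z ∈ S)
        rw [this] } }
  have key : ∀ x : ↥(colimit F), (colimit.desc F c) x = (x ∈ S) := by
    intro x
    obtain ⟨n, z, rfl⟩ := Concrete.colimit_exists_rep F x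
    rw [← comp_apply, colimit.ι_desc]
    rfl
  have hc : Continuous fun x : ↥(colimit F) => x ∈ S := by
    have he : (fun x : ↥(colimit F) => x ∈ S) = ⇑(colimit.desc F c) := by
      funext x; exact (key x).symm
    rw [he]
    exact (colimit.desc F c).hom.continuous
  exact isOpen_iff_continuous_mem.mpr hc

/-- transitive preimage property from stepwise -/
lemma preimage_trans (G : ∀ m, Set (F.obj m))
    (hstep : ∀ m, F.map (homOfLE (Nat.le_succ m)) ⁻¹' G (m + 1) = G m) :
    ∀ m k (h : m ≤ k), F.map (homOfLE h) ⁻¹' G k = G m := by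
  intro m k h
  induction k, h using Nat.le_induction with
  | base =>
    have : homOfLE (le_refl m) = 𝟙 m := rfl
    rw [this, F.map_id]
    rfl
  | succ k h ih =>
    have hcomp : F.map (homOfLE (le_trans h (Nat.le_succ k))) =
        F.map (homOfLE h) ≫ F.map (homOfLE (Nat.le_succ k)) := by
      rw [← F.map_comp]; rfl
    ext x
    have happ : F.map (homOfLE (le_trans h (Nat.le_succ k))) x =
        F.map (homOfLE (Nat.le_succ k)) (F.map (homOfLE h) x) := by
      rw [hcomp]; rfl
    have e1 := Set.ext_iff.mp (hstep k) (F.map (homOfLE h) x)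
    have e2 := Set.ext_iff.mp ih x
    simp only [Set.mem_preimage] at e1 e2 ⊢
    rw [happ]
    exact e1.trans e2

/-- preimage of union-of-images -/
lemma preimage_iUnion_image (G : ∀ m, Set (F.obj m))
    (hpre : ∀ m k (h : m ≤ k), F.map (homOfLE h) ⁻¹' G k = G m) (k : ℕ) :
    colimit.ι F k ⁻¹' (⋃ m, colimit.ι F m '' G m) = G k := by
  ext z
  simp only [Set.mem_preimage, Set.mem_iUnion, Set.mem_image]
  constructor
  · rintro ⟨m, w, hw, he⟩
    obtain ⟨l, f, g', hfg⟩ := Concrete.colimit_exists_of_rep_eq F _ _ he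
    have hf : F.map f = F.map (homOfLE (leOfHom f)) := by
      congr 1
    have hg : F.map g' = F.map (homOfLE (leOfHom g')) := by
      congr 1
    have hwl : F.map (homOfLE (leOfHom f)) w ∈ G l := by
      rw [← Set.ext_iff.mp (hpre m l (leOfHom f)) w] at hw
      exact hw
    rw [hf, hg] at hfg
    rw [hfg] at hwl
    exact (Set.ext_iff.mp (hpre k l (leOfHom g')) z).mp hwl
  · intro hz
    exact ⟨k, z, hz, rfl⟩
end

section
variable (F : ℕ ⥤ TopCat.{0})

lemma F_step
    (hcyl : ∀ i : ℕ, ∃ (A : Type) (_ : TopologicalSpace A) (g : A → F.obj i),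
      Continuous g ∧ ∃ j : Cyl g → F.obj (i + 1), Continuous j ∧
        Topology.IsOpenEmbedding j ∧
        ∀ x : F.obj i, j (cylIncl g x) = F.map (homOfLE (Nat.le_succ i)) x)
    (i : ℕ) (U V : Set (F.obj i)) (hU : IsOpen U) (hV : IsOpen V) (hd : Disjoint U V) :
    ∃ U' V' : Set (F.obj (i + 1)), IsOpen U' ∧ IsOpen V' ∧ Disjoint U' V' ∧
      F.map (homOfLE (Nat.le_succ i)) ⁻¹' U' = U ∧
      F.map (homOfLE (Nat.le_succ i)) ⁻¹' V' = V := by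
  obtain ⟨A, instA, g, hg, j, hjc, hjo, hj⟩ := hcyl i
  exact cyl_step hg hjo hj U V hU hV hd

lemma family
    (hcyl : ∀ i : ℕ, ∃ (A : Type) (_ : TopologicalSpace A) (g : A → F.obj i),
      Continuous g ∧ ∃ j : Cyl g → F.obj (i + 1), Continuous j ∧
        Topology.IsOpenEmbedding j ∧
        ∀ x : F.obj i, j (cylIncl g x) = F.map (homOfLE (Nat.le_succ i)) x)
    (n : ℕ) (U V : Set (F.obj n)) (hU : IsOpen U) (hV : IsOpen V) (hd : Disjoint U V) :
    ∃ G H : ∀ m, Set (F.obj m),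
      (∀ m, IsOpen (G m)) ∧ (∀ m, IsOpen (H m)) ∧ (∀ m, Disjoint (G m) (H m)) ∧
      (∀ m, F.map (homOfLE (Nat.le_succ m)) ⁻¹' G (m + 1) = G m) ∧
      (∀ m, F.map (homOfLE (Nat.le_succ m)) ⁻¹' H (m + 1) = H m) ∧
      G n = U ∧ H n = V := by
  choose fU fV hfU hfV hfd hfpU hfpV using F_step F hcyl
  let C : ℕ → Type := fun m =>
    {p : Set (F.obj m) × Set (F.obj m) // IsOpen p.1 ∧ IsOpen p.2 ∧ Disjoint p.1 p.2}
  let stepC : ∀ {k}, C k → C (k + 1) := fun {k} p =>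
    ⟨(fU k p.1.1 p.1.2 p.2.1 p.2.2.1 p.2.2.2, fV k p.1.1 p.1.2 p.2.1 p.2.2.1 p.2.2.2),
      hfU k p.1.1 p.1.2 p.2.1 p.2.2.1 p.2.2.2, hfV k p.1.1 p.1.2 p.2.1 p.2.2.1 p.2.2.2,
      hfd k p.1.1 p.1.2 p.2.1 p.2.2.1 p.2.2.2⟩
  let base : C n := ⟨(U, V), hU, hV, hd⟩
  let D : ∀ m, n ≤ m → C m := fun m h => Nat.leRecOn h (fun {k} => stepC) base
  let G : ∀ m, Set (F.obj m) := fun m =>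
    if h : n ≤ m then (D m h).1.1 else F.map (homOfLE (le_of_not_ge h)) ⁻¹' U
  let H : ∀ m, Set (F.obj m) := fun m =>
    if h : n ≤ m then (D m h).1.2 else F.map (homOfLE (le_of_not_ge h)) ⁻¹' V
  have hG : ∀ m, G m = if h : n ≤ m then (D m h).1.1
      else F.map (homOfLE (le_of_not_ge h)) ⁻¹' U := fun m => rfl
  have hH : ∀ m, H m = if h : n ≤ m then (D m h).1.2
      else F.map (homOfLE (le_of_not_ge h)) ⁻¹' V := fun m => rfl
  have hDsucc : ∀ m (h : n ≤ m), D (m + 1) (h.trans (Nat.le_succ m)) = stepC (D m h) :=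
    fun m h => Nat.leRecOn_succ h base
  have hDself : ∀ (h : n ≤ n), D n h = base := fun h => Nat.leRecOn_self base
  refine ⟨G, H, ?_, ?_, ?_, ?_, ?_, ?_, ?_⟩
  · intro m; rw [hG m]
    by_cases h : n ≤ m
    · rw [dif_pos h]; exact (D m h).2.1
    · rw [dif_neg h]; exact (F.map _).hom.continuous.isOpen_preimage _ hU
  · intro m; rw [hH m]
    by_cases h : n ≤ m
    · rw [dif_pos h]; exact (D m h).2.2.1
    · rw [dif_neg h]; exact (F.map _).hom.continuous.isOpen_preimage _ hV
  · intro m; rw [hG m, hH m]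
    by_cases h : n ≤ m
    · rw [dif_pos h, dif_pos h]; exact (D m h).2.2.2
    · rw [dif_neg h, dif_neg h]; exact Set.disjoint_left.mpr
        (fun x hx hx' => Set.disjoint_left.mp hd hx hx')
  · intro m; rw [hG m, hG (m + 1)]
    by_cases h : n ≤ m
    · rw [dif_pos h, dif_pos (h.trans (Nat.le_succ m)), hDsucc m h]
      exact hfpU m (D m h).1.1 (D m h).1.2 (D m h).2.1 (D m h).2.2.1 (D m h).2.2.2
    · by_cases h2 : n ≤ m + 1
      · have hn : n = m + 1 := le_antisymm h2 (Nat.succ_le_of_lt (lt_of_not_ge h))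
        subst hn
        rw [dif_pos h2, dif_neg h, hDself h2]
      · rw [dif_neg h2, dif_neg h]
        have hcomp : F.map (homOfLE (le_of_not_ge h)) =
            F.map (homOfLE (Nat.le_succ m)) ≫ F.map (homOfLE (le_of_not_ge h2)) := by
          rw [← F.map_comp]; congr 1
        ext x
        simp only [Set.mem_preimage]
        rw [hcomp]
        rfl
  · intro m; rw [hH m, hH (m + 1)]
    by_cases h : n ≤ m
    · rw [dif_pos h, dif_pos (h.trans (Nat.le_succ m)), hDsucc m h]
      exact hfpV m (D m h).1.1 (D m h).1.2 (D m h).2.1 (D m h).2.2.1 (D m h).2.2.2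
    · by_cases h2 : n ≤ m + 1
      · have hn : n = m + 1 := le_antisymm h2 (Nat.succ_le_of_lt (lt_of_not_ge h))
        subst hn
        rw [dif_pos h2, dif_neg h, hDself h2]
      · rw [dif_neg h2, dif_neg h]
        have hcomp : F.map (homOfLE (le_of_not_ge h)) =
            F.map (homOfLE (Nat.le_succ m)) ≫ F.map (homOfLE (le_of_not_ge h2)) := by
          rw [← F.map_comp]; congr 1
        ext x
        simp only [Set.mem_preimage]
        rw [hcomp]
        rfl
  · rw [hG n, dif_pos (le_refl n), hDself (le_refl n)]
  · rw [hH n, dif_pos (le_refl n), hDself (le_refl n)]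

end


/-- If X₀ ↪ X₁ ↪ ⋯ is a sequence of closed inclusions of Hausdorff spaces,
each of which is a mapping cylinder inclusion (factoring as X_i ↪ X_i ∪_A (A × ℝ_{≥0}) ↪
X_{i+1} with the second map an open inclusion), then the colimit is Hausdorff. -/
theorem stmt10 (F : ℕ ⥤ TopCat.{0})
    (hT2 : ∀ i : ℕ, T2Space (F.obj i))
    (hclosed : ∀ i : ℕ, Topology.IsClosedEmbedding (F.map (homOfLE (Nat.le_succ i))))
    (hcyl : ∀ i : ℕ, ∃ (A : Type) (_ : TopologicalSpace A) (g : A → F.obj i),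
      Continuous g ∧ ∃ j : Cyl g → F.obj (i + 1), Continuous j ∧
        Topology.IsOpenEmbedding j ∧
        ∀ x : F.obj i, j (cylIncl g x) = F.map (homOfLE (Nat.le_succ i)) x) :
    T2Space ↥(colimit F) := by
  constructor
  intro x y hxy
  obtain ⟨i, a, rfl⟩ := Concrete.colimit_exists_rep F x
  obtain ⟨i', b, rfl⟩ := Concrete.colimit_exists_rep F y
  set n := max i i' with hn
  set a' := F.map (homOfLE (le_max_left i i')) a with ha'
  set b' := F.map (homOfLE (le_max_right i i')) b with hb'
  have ea : colimit.ι F n a' = colimit.ι F i a := by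
    rw [ha', ← comp_apply, colimit.w]
  have eb : colimit.ι F n b' = colimit.ι F i' b := by
    rw [hb', ← comp_apply, colimit.w]
  rw [← ea, ← eb] at hxy
  have hab : a' ≠ b' := fun h => hxy (by rw [h])
  haveI := hT2 n
  obtain ⟨U, V, hU, hV, haU, hbV, hd⟩ := t2_separation hab
  obtain ⟨G, H, hGopen, hHopen, hdis, hstepG, hstepH, hGn, hHn⟩ :=
    family F hcyl n U V hU hV hd
  have hpreG := preimage_trans F G hstepG
  have hpreH := preimage_trans F H hstepH
  refine ⟨⋃ m, colimit.ι F m '' G m, ⋃ m, colimit.ι F m '' H m, ?_, ?_, ?_, ?_, ?_⟩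
  · exact isOpen_colimit F _ (fun k => by
      rw [preimage_iUnion_image F G hpreG k]; exact hGopen k)
  · exact isOpen_colimit F _ (fun k => by
      rw [preimage_iUnion_image F H hpreH k]; exact hHopen k)
  · rw [← ea]
    exact Set.mem_iUnion.mpr ⟨n, a', hGn ▸ haU, rfl⟩
  · rw [← eb]
    exact Set.mem_iUnion.mpr ⟨n, b', hHn ▸ hbV, rfl⟩
  · rw [Set.disjoint_left]
    rintro p hp hp'
    obtain ⟨m, w, hw, rfl⟩ := by
      simpa only [Set.mem_iUnion, Set.mem_image] using hp
    have hz : w ∈ colimit.ι F m ⁻¹' (⋃ m, colimit.ι F m '' H m) := hp'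
    rw [preimage_iUnion_image F H hpreH m] at hz
    exact Set.disjoint_left.mp (hdis m) hw hz
end

section
/- For each t ∈ [0,1], the map f ↦ f(f*f)^{-t/2} defines a continuous deformation retraction from the space of injective linear maps Inj(ℝⁿ, ℝᵐ) onto the subspace of isometric injections (linear maps f with f*f = id). Moreover this deformation retraction is equivariant under the action of O(n) × O(m) by pre- and post-composition. -/
open ContinuousLinearMap

namespace Stmt13
variable {n m : ℕ}

noncomputable def Tof (f : EuclideanSpace ℝ (Fin n) →L[ℝ] EuclideanSpace ℝ (Fin m)) :
    EuclideanSpace ℝ (Fin n) →L[ℝ] EuclideanSpace ℝ (Fin n) :=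
  (ContinuousLinearMap.adjoint f).comp f

lemma Tof_symm (f : EuclideanSpace ℝ (Fin n) →L[ℝ] EuclideanSpace ℝ (Fin m)) :
    (Tof f : EuclideanSpace ℝ (Fin n) →ₗ[ℝ] EuclideanSpace ℝ (Fin n)).IsSymmetric := by
  rw [← ContinuousLinearMap.isSelfAdjoint_iff_isSymmetric]
  simp [Tof, IsSelfAdjoint, star_eq_adjoint, adjoint_comp, adjoint_adjoint]

noncomputable def eb (f : EuclideanSpace ℝ (Fin n) →L[ℝ] EuclideanSpace ℝ (Fin m)) :
    OrthonormalBasis (Fin n) ℝ (EuclideanSpace ℝ (Fin n)) :=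
  (Tof_symm f).eigenvectorBasis finrank_euclideanSpace_fin

noncomputable def ev (f : EuclideanSpace ℝ (Fin n) →L[ℝ] EuclideanSpace ℝ (Fin m)) : Fin n → ℝ :=
  (Tof_symm f).eigenvalues finrank_euclideanSpace_fin

lemma repr_Tof (f : EuclideanSpace ℝ (Fin n) →L[ℝ] EuclideanSpace ℝ (Fin m)) (v) (i) :
    (eb f).repr (Tof f v) i = ev f i * (eb f).repr v i :=
  (Tof_symm f).eigenvectorBasis_apply_self_apply finrank_euclideanSpace_fin v i

lemma Tof_basis (f : EuclideanSpace ℝ (Fin n) →L[ℝ] EuclideanSpace ℝ (Fin m)) (i) :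
    Tof f (eb f i) = ev f i • eb f i := by
  exact (Tof_symm f).apply_eigenvectorBasis finrank_euclideanSpace_fin i


noncomputable def diag (c : Fin n → ℝ) :
    EuclideanSpace ℝ (Fin n) →L[ℝ] EuclideanSpace ℝ (Fin n) :=
  LinearMap.toContinuousLinearMap
    { toFun := fun x => (WithLp.toLp 2 (fun i => c i * x i) : EuclideanSpace ℝ (Fin n))
      map_add' := fun x y => PiLp.ext fun i => mul_add _ _ _
      map_smul' := fun r x => PiLp.ext fun i => by
        simp [smul_eq_mul]; ring }

lemma diag_apply (c : Fin n → ℝ) (x : EuclideanSpace ℝ (Fin n)) (i : Fin n) :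
    diag c x i = c i * x i := rfl

noncomputable def fc (φ : ℝ → ℝ) (f : EuclideanSpace ℝ (Fin n) →L[ℝ] EuclideanSpace ℝ (Fin m)) :
    EuclideanSpace ℝ (Fin n) →L[ℝ] EuclideanSpace ℝ (Fin n) :=
  ((eb f).repr.symm.toLinearIsometry.toContinuousLinearMap).comp
    ((diag (fun i => φ (ev f i))).comp ((eb f).repr.toLinearIsometry.toContinuousLinearMap))

lemma repr_fc (φ : ℝ → ℝ) (f : EuclideanSpace ℝ (Fin n) →L[ℝ] EuclideanSpace ℝ (Fin m)) (v) (i) :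
    (eb f).repr (fc φ f v) i = φ (ev f i) * (eb f).repr v i := by
  simp only [fc, ContinuousLinearMap.comp_apply, LinearIsometry.coe_toContinuousLinearMap,
    LinearIsometryEquiv.coe_toLinearIsometry, LinearIsometryEquiv.apply_symm_apply]
  rfl

lemma repr_smul (f : EuclideanSpace ℝ (Fin n) →L[ℝ] EuclideanSpace ℝ (Fin m)) (c : ℝ) (v) (i) :
    (eb f).repr (c • v) i = c * (eb f).repr v i := by
  rw [map_smul]; rfl

lemma fc_eig (φ : ℝ → ℝ) (f : EuclideanSpace ℝ (Fin n) →L[ℝ] EuclideanSpace ℝ (Fin m))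
    {v} {μ : ℝ} (hv : Tof f v = μ • v) : fc φ f v = φ μ • v := by
  apply (eb f).repr.injective
  ext i
  have hc : ev f i * (eb f).repr v i = μ * (eb f).repr v i := by
    rw [← repr_Tof, hv, repr_smul]
  rw [repr_fc, repr_smul]
  rcases eq_or_ne ((eb f).repr v i) 0 with h | h
  · simp [h]
  · rw [mul_right_cancel₀ h hc]

lemma fc_basis (φ : ℝ → ℝ) (f : EuclideanSpace ℝ (Fin n) →L[ℝ] EuclideanSpace ℝ (Fin m)) (i) :
    fc φ f (eb f i) = φ (ev f i) • eb f i :=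
  fc_eig φ f (Tof_basis f i)

lemma fc_unique (φ : ℝ → ℝ) (f : EuclideanSpace ℝ (Fin n) →L[ℝ] EuclideanSpace ℝ (Fin m))
    (g : EuclideanSpace ℝ (Fin n) →L[ℝ] EuclideanSpace ℝ (Fin n))
    (hg : ∀ i, g (eb f i) = φ (ev f i) • eb f i) : g = fc φ f := by
  apply ContinuousLinearMap.coe_injective
  apply Module.Basis.ext (eb f).toBasis
  intro i
  simp only [OrthonormalBasis.coe_toBasis, ContinuousLinearMap.coe_coe]
  rw [hg, fc_basis]


open RealInnerProductSpace in
lemma inner_coords (f : EuclideanSpace ℝ (Fin n) →L[ℝ] EuclideanSpace ℝ (Fin m))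
    (x y : EuclideanSpace ℝ (Fin n)) :
    ⟪x, y⟫ = ∑ i, (eb f).repr x i * (eb f).repr y i := by
  calc (inner ℝ x y : ℝ) = inner ℝ ((eb f).repr x) ((eb f).repr y) :=
        ((eb f).repr.inner_map_map x y).symm
    _ = ∑ i, (eb f).repr x i * (eb f).repr y i := by
        simp only [PiLp.inner_apply, RCLike.inner_apply, conj_trivial]
        exact Finset.sum_congr rfl fun i _ => mul_comm _ _

open RealInnerProductSpace in
lemma Tof_inner (f : EuclideanSpace ℝ (Fin n) →L[ℝ] EuclideanSpace ℝ (Fin m)) (v w) :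
    ⟪Tof f v, w⟫ = ⟪f v, f w⟫ := by
  simpa [Tof] using ContinuousLinearMap.adjoint_inner_left f w (f v)

lemma ev_pos (f : EuclideanSpace ℝ (Fin n) →L[ℝ] EuclideanSpace ℝ (Fin m))
    (hf : Function.Injective f) (i) : 0 < ev f i := by
  have hB : ‖eb f i‖ = 1 := (eb f).orthonormal.1 i
  have h1 : inner ℝ (Tof f (eb f i)) (eb f i) = ev f i := by
    rw [Tof_basis, real_inner_smul_left, real_inner_self_eq_norm_sq, hB]
    ring
  have h2 : inner ℝ (Tof f (eb f i)) (eb f i) = ‖f (eb f i)‖ ^ 2 := by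
    rw [Tof_inner, real_inner_self_eq_norm_sq]
  have hne : f (eb f i) ≠ 0 := by
    intro h
    have : eb f i = 0 := hf (by simpa using h)
    rw [this] at hB; simp at hB
  have : 0 < ‖f (eb f i)‖ ^ 2 := pow_pos (norm_pos_iff.mpr hne) 2
  rw [← h1, h2]; exact this

lemma fc_norm_le (φ : ℝ → ℝ) (f : EuclideanSpace ℝ (Fin n) →L[ℝ] EuclideanSpace ℝ (Fin m))
    (M : ℝ) (hM : 0 ≤ M) (h : ∀ i, |φ (ev f i)| ≤ M) : ‖fc φ f‖ ≤ M := by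
  apply ContinuousLinearMap.opNorm_le_bound _ hM
  intro v
  rw [← (eb f).repr.norm_map (fc φ f v), ← (eb f).repr.norm_map v,
    EuclideanSpace.norm_eq, EuclideanSpace.norm_eq]
  have key : ∀ i : Fin n, ‖(eb f).repr (fc φ f v) i‖ ^ 2 ≤ M ^ 2 * ‖(eb f).repr v i‖ ^ 2 := by
    intro i
    rw [repr_fc]
    have : ‖φ (ev f i) * (eb f).repr v i‖ = |φ (ev f i)| * ‖(eb f).repr v i‖ := by
      simp [Real.norm_eq_abs, abs_mul]
    rw [this, mul_pow]
    gcongr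
    exact h i
  calc Real.sqrt (∑ i, ‖(eb f).repr (fc φ f v) i‖ ^ 2)
      ≤ Real.sqrt (∑ i, M ^ 2 * ‖(eb f).repr v i‖ ^ 2) := by
        apply Real.sqrt_le_sqrt
        exact Finset.sum_le_sum fun i _ => key i
    _ = M * Real.sqrt (∑ i, ‖(eb f).repr v i‖ ^ 2) := by
        rw [← Finset.mul_sum, Real.sqrt_mul (by positivity), Real.sqrt_sq hM]

lemma fc_sub (φ ψ : ℝ → ℝ) (f : EuclideanSpace ℝ (Fin n) →L[ℝ] EuclideanSpace ℝ (Fin m)) :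
    fc φ f - fc ψ f = fc (fun μ => φ μ - ψ μ) f := by
  apply fc_unique
  intro i
  simp [ContinuousLinearMap.sub_apply, fc_basis, sub_smul]

lemma pow_basis (f : EuclideanSpace ℝ (Fin n) →L[ℝ] EuclideanSpace ℝ (Fin m)) (k : ℕ) (i) :
    (Tof f ^ k) (eb f i) = (ev f i ^ k) • eb f i := by
  induction k with
  | zero => simp
  | succ k ih =>
      rw [pow_succ, ContinuousLinearMap.mul_apply, Tof_basis, map_smul, ih, smul_smul, pow_succ]
      ring_nf

lemma aeval_basis (f : EuclideanSpace ℝ (Fin n) →L[ℝ] EuclideanSpace ℝ (Fin m))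
    (p : Polynomial ℝ) (i) :
    (Polynomial.aeval (Tof f) p) (eb f i) = p.eval (ev f i) • eb f i := by
  induction p using Polynomial.induction_on' with
  | add p q hp hq => simp [map_add, ContinuousLinearMap.add_apply, hp, hq, add_smul]
  | monomial k c =>
      rw [Polynomial.aeval_monomial, Polynomial.eval_monomial, ContinuousLinearMap.mul_apply,
        pow_basis, map_smul, Algebra.algebraMap_eq_smul_one]
      simp [smul_smul, mul_comm]

lemma aeval_eq_fc (f : EuclideanSpace ℝ (Fin n) →L[ℝ] EuclideanSpace ℝ (Fin m))
    (p : Polynomial ℝ) :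
    (Polynomial.aeval (Tof f) p : EuclideanSpace ℝ (Fin n) →L[ℝ] EuclideanSpace ℝ (Fin n)) =
      fc (fun μ => p.eval μ) f :=
  fc_unique _ _ _ (aeval_basis f p)


lemma ev_le_norm (f : EuclideanSpace ℝ (Fin n) →L[ℝ] EuclideanSpace ℝ (Fin m)) (i) :
    ev f i ≤ ‖Tof f‖ := by
  have hB : ‖eb f i‖ = 1 := (eb f).orthonormal.1 i
  have h1 : inner ℝ (Tof f (eb f i)) (eb f i) = ev f i := by
    rw [Tof_basis, real_inner_smul_left, real_inner_self_eq_norm_sq, hB]; ring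
  calc ev f i = inner ℝ (Tof f (eb f i)) (eb f i) := h1.symm
    _ ≤ ‖Tof f (eb f i)‖ * ‖eb f i‖ := real_inner_le_norm _ _
    _ ≤ (‖Tof f‖ * ‖eb f i‖) * ‖eb f i‖ := by
        gcongr; exact (Tof f).le_opNorm _
    _ = ‖Tof f‖ := by rw [hB]; ring

open RealInnerProductSpace in
lemma inner_Tof_lower (f₀ : EuclideanSpace ℝ (Fin n) →L[ℝ] EuclideanSpace ℝ (Fin m))
    {a : ℝ} (ha : ∀ i, a ≤ ev f₀ i) (w : EuclideanSpace ℝ (Fin n)) (hw : ‖w‖ = 1) :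
    a ≤ ⟪Tof f₀ w, w⟫ := by
  have h1 : ⟪Tof f₀ w, w⟫ = ∑ i, ev f₀ i * ((eb f₀).repr w i) ^ 2 := by
    rw [inner_coords f₀]
    refine Finset.sum_congr rfl fun i _ => ?_
    rw [repr_Tof]; ring
  have h2 : ∑ i, ((eb f₀).repr w i) ^ 2 = 1 := by
    have := inner_coords f₀ w w
    rw [real_inner_self_eq_norm_sq, hw] at this
    simpa [sq] using this.symm
  calc a = ∑ i, a * ((eb f₀).repr w i) ^ 2 := by rw [← Finset.mul_sum, h2, mul_one]
    _ ≤ ∑ i, ev f₀ i * ((eb f₀).repr w i) ^ 2 :=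
        Finset.sum_le_sum fun i _ => mul_le_mul_of_nonneg_right (ha i) (sq_nonneg _)
    _ = ⟪Tof f₀ w, w⟫ := h1.symm

open RealInnerProductSpace in
lemma ev_ge (f f₀ : EuclideanSpace ℝ (Fin n) →L[ℝ] EuclideanSpace ℝ (Fin m))
    {a : ℝ} (ha : ∀ i, a ≤ ev f₀ i) (i) :
    a - ‖Tof f - Tof f₀‖ ≤ ev f i := by
  have hB : ‖eb f i‖ = 1 := (eb f).orthonormal.1 i
  have h1 : ⟪Tof f (eb f i), eb f i⟫ = ev f i := by
    rw [Tof_basis, real_inner_smul_left, real_inner_self_eq_norm_sq, hB]; ring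
  have h2 : ⟪Tof f (eb f i), eb f i⟫ =
      ⟪Tof f₀ (eb f i), eb f i⟫ + ⟪(Tof f - Tof f₀) (eb f i), eb f i⟫ := by
    rw [ContinuousLinearMap.sub_apply, inner_sub_left]; ring
  have h3 : |⟪(Tof f - Tof f₀) (eb f i), eb f i⟫| ≤ ‖Tof f - Tof f₀‖ := by
    calc |⟪(Tof f - Tof f₀) (eb f i), eb f i⟫| ≤ ‖(Tof f - Tof f₀) (eb f i)‖ * ‖eb f i‖ :=
          abs_real_inner_le_norm _ _
      _ ≤ (‖Tof f - Tof f₀‖ * ‖eb f i‖) * ‖eb f i‖ := by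
          gcongr; exact (Tof f - Tof f₀).le_opNorm _
      _ = ‖Tof f - Tof f₀‖ := by rw [hB]; ring
  have h4 : a ≤ ⟪Tof f₀ (eb f i), eb f i⟫ := inner_Tof_lower f₀ ha _ hB
  have h5 : -‖Tof f - Tof f₀‖ ≤ ⟪(Tof f - Tof f₀) (eb f i), eb f i⟫ := neg_le_of_abs_le h3
  rw [← h1, h2]; linarith

lemma Tof_cont : Continuous (fun f : EuclideanSpace ℝ (Fin n) →L[ℝ] EuclideanSpace ℝ (Fin m) =>
    Tof f) :=
  Continuous.clm_comp (ContinuousLinearMap.adjoint :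
    (EuclideanSpace ℝ (Fin n) →L[ℝ] EuclideanSpace ℝ (Fin m)) ≃ₗᵢ⋆[ℝ] _).continuous continuous_id

lemma aeval_cont (p : Polynomial ℝ) :
    Continuous (fun T : EuclideanSpace ℝ (Fin n) →L[ℝ] EuclideanSpace ℝ (Fin n) =>
      (Polynomial.aeval T p :
        EuclideanSpace ℝ (Fin n) →L[ℝ] EuclideanSpace ℝ (Fin n))) := by
  have : (fun T : EuclideanSpace ℝ (Fin n) →L[ℝ] EuclideanSpace ℝ (Fin n) =>
      (Polynomial.aeval T p : EuclideanSpace ℝ (Fin n) →L[ℝ] EuclideanSpace ℝ (Fin n))) =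
      fun T => ∑ i ∈ Finset.range (p.natDegree + 1), p.coeff i • T ^ i := by
    funext T
    exact Polynomial.aeval_eq_sum_range T
  rw [this]
  exact continuous_finset_sum _ fun i _ => by fun_prop


lemma four_triangle {X : Type*} [SeminormedAddCommGroup X] (a b c d e : X) :
    ‖a - e‖ ≤ ‖a - b‖ + ‖b - c‖ + ‖c - d‖ + ‖d - e‖ := by
  have h1 : dist a d ≤ dist a b + dist b c + dist c d := dist_triangle4 a b c d
  have h2 : dist a e ≤ dist a d + dist d e := dist_triangle a d e
  simp only [dist_eq_norm] at h1 h2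
  linarith

lemma exists_lower (f₀ : {f : EuclideanSpace ℝ (Fin n) →L[ℝ] EuclideanSpace ℝ (Fin m) //
    Function.Injective f}) : ∃ a : ℝ, 0 < a ∧ ∀ i, a ≤ ev f₀.1 i := by
  rcases isEmpty_or_nonempty (Fin n) with hE | hE
  · exact ⟨1, one_pos, fun i => (hE.false i).elim⟩
  · refine ⟨Finset.univ.inf' Finset.univ_nonempty (ev f₀.1), ?_, ?_⟩
    · rw [Finset.lt_inf'_iff]
      exact fun i _ => ev_pos _ f₀.2 i
    · exact fun i => Finset.inf'_le _ (Finset.mem_univ i)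

lemma g_cont :
    Continuous (fun p : {f : EuclideanSpace ℝ (Fin n) →L[ℝ] EuclideanSpace ℝ (Fin m) //
        Function.Injective f} × unitInterval =>
      fc (fun μ => μ ^ (-(p.2 : ℝ) / 2)) p.1.1) := by
  rw [continuous_iff_continuousAt]
  rintro ⟨f₀, t₀⟩
  rw [Metric.continuousAt_iff]
  intro ε hε
  obtain ⟨a, ha0, ha⟩ := exists_lower (n := n) (m := m) f₀
  set b : ℝ := ‖Tof f₀.1‖ + a / 2 with hb
  have hab : a / 2 ≤ b := by
    have : (0:ℝ) ≤ ‖Tof f₀.1‖ := norm_nonneg _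
    simp only [hb]; linarith
  have hIpos : ∀ μ ∈ Set.Icc (a/2) b, (0:ℝ) < μ := fun μ hμ => lt_of_lt_of_le (by linarith) hμ.1
  -- eigenvalues of f₀ in the interval
  have hf₀mem : ∀ i, ev f₀.1 i ∈ Set.Icc (a/2) b := by
    intro i
    constructor
    · linarith [ha i]
    · have := ev_le_norm f₀.1 i
      simp only [hb]; linarith
  -- uniform continuity in t
  have hUC : ∃ δ₁ > 0, ∀ t : ℝ, t ∈ Set.Icc (0:ℝ) 1 → |t - (t₀:ℝ)| < δ₁ →
      ∀ μ ∈ Set.Icc (a/2) b, |μ ^ (-t/2) - μ ^ (-(t₀:ℝ)/2)| ≤ ε/4 := by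
    have hK : IsCompact ((Set.Icc (0:ℝ) 1) ×ˢ Set.Icc (a/2) b) :=
      isCompact_Icc.prod isCompact_Icc
    have hcont : ContinuousOn (fun q : ℝ × ℝ => q.2 ^ (-q.1/2))
        ((Set.Icc (0:ℝ) 1) ×ˢ Set.Icc (a/2) b) := by
      intro q hq
      have hq2 : (0:ℝ) < q.2 := hIpos q.2 hq.2
      have : ContinuousAt (fun q : ℝ × ℝ => q.2 ^ (-q.1/2)) q :=
        (continuous_snd.continuousAt).rpow
          ((continuous_fst.neg.div_const 2).continuousAt) (Or.inl hq2.ne')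
      exact this.continuousWithinAt
    have hucK := hK.uniformContinuousOn_of_continuous hcont
    rw [Metric.uniformContinuousOn_iff] at hucK
    obtain ⟨δ₁, hδ₁, hδ⟩ := hucK (ε/4) (by linarith)
    refine ⟨δ₁, hδ₁, fun t ht hdt μ hμ => ?_⟩
    have hd : dist ((t, μ) : ℝ × ℝ) ((t₀:ℝ), μ) < δ₁ := by
      rw [Prod.dist_eq]
      apply max_lt
      · rwa [Real.dist_eq]
      · simpa using hδ₁
    have h := hδ ((t, μ)) ⟨ht, hμ⟩ ((t₀:ℝ), μ) ⟨t₀.2, hμ⟩ hd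
    rw [Real.dist_eq] at h
    exact le_of_lt h
  obtain ⟨δ₁, hδ₁pos, hδ₁⟩ := hUC
  -- Weierstrass approximation of μ ↦ μ ^ (-t₀/2) on [a/2, b]
  obtain ⟨p, hp⟩ : ∃ p : Polynomial ℝ, ∀ μ ∈ Set.Icc (a/2) b,
      |p.eval μ - μ ^ (-(t₀:ℝ)/2)| < ε/4 := by
    apply exists_polynomial_near_of_continuousOn
    · intro μ hμ
      exact (Real.continuousAt_rpow_const μ (-(t₀:ℝ)/2)
        (Or.inl (hIpos μ hμ).ne')).continuousWithinAt
    · linarith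
  -- continuity of the polynomial functional calculus at f₀
  have hq : ContinuousAt (fun f : {f : EuclideanSpace ℝ (Fin n) →L[ℝ]
      EuclideanSpace ℝ (Fin m) // Function.Injective f} =>
        (Polynomial.aeval (Tof f.1) p :
          EuclideanSpace ℝ (Fin n) →L[ℝ] EuclideanSpace ℝ (Fin n))) f₀ :=
    (((aeval_cont p).comp Tof_cont).comp continuous_subtype_val).continuousAt
  rw [Metric.continuousAt_iff] at hq
  obtain ⟨δ₂, hδ₂pos, hδ₂⟩ := hq (ε/4) (by linarith)
  -- continuity of Tof at f₀
  have hT : ContinuousAt (fun f : {f : EuclideanSpace ℝ (Fin n) →L[ℝ]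
      EuclideanSpace ℝ (Fin m) // Function.Injective f} => Tof f.1) f₀ :=
    (Tof_cont.comp continuous_subtype_val).continuousAt
  rw [Metric.continuousAt_iff] at hT
  obtain ⟨δ₃, hδ₃pos, hδ₃⟩ := hT (a/2) (by linarith)
  refine ⟨min (min δ₁ δ₂) δ₃, by positivity, ?_⟩
  rintro ⟨f, t⟩ hdist
  rw [Prod.dist_eq] at hdist
  have hdf : dist f f₀ < min (min δ₁ δ₂) δ₃ := lt_of_le_of_lt (le_max_left _ _) hdist
  have hdt : dist t t₀ < δ₁ :=
    lt_of_lt_of_le (lt_of_le_of_lt (le_max_right _ _) hdist)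
      (le_trans (min_le_left _ _) (min_le_left _ _))
  have hdf₂ : dist f f₀ < δ₂ :=
    lt_of_lt_of_le hdf (le_trans (min_le_left _ _) (min_le_right _ _))
  have hdf₃ : dist f f₀ < δ₃ := lt_of_lt_of_le hdf (min_le_right _ _)
  -- eigenvalue bounds for f
  have hTlt : ‖Tof f.1 - Tof f₀.1‖ < a/2 := by
    have := hδ₃ hdf₃
    rwa [dist_eq_norm] at this
  have hfmem : ∀ i, ev f.1 i ∈ Set.Icc (a/2) b := by
    intro i
    constructor
    · have := ev_ge f.1 f₀.1 ha i
      linarith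
    · have h1 := ev_le_norm f.1 i
      have h2 : ‖Tof f.1‖ ≤ ‖Tof f₀.1‖ + ‖Tof f.1 - Tof f₀.1‖ := by
        have := norm_sub_norm_le (Tof f.1) (Tof f₀.1)
        linarith
      simp only [hb]
      linarith
  -- the four-term estimate
  set φt : ℝ → ℝ := fun μ => μ ^ (-(t:ℝ)/2) with hφt
  set φt₀ : ℝ → ℝ := fun μ => μ ^ (-(t₀:ℝ)/2) with hφt₀
  have hA : ‖fc φt f.1 - fc φt₀ f.1‖ ≤ ε/4 := by
    rw [fc_sub]
    apply fc_norm_le _ _ _ (by linarith)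
    intro i
    have hdt' : |(t:ℝ) - (t₀:ℝ)| < δ₁ := by
      rw [Subtype.dist_eq, Real.dist_eq] at hdt
      exact hdt
    exact hδ₁ t t.2 hdt' _ (hfmem i)
  have hB : ‖fc φt₀ f.1 - (Polynomial.aeval (Tof f.1) p :
      EuclideanSpace ℝ (Fin n) →L[ℝ] EuclideanSpace ℝ (Fin n))‖ ≤ ε/4 := by
    rw [aeval_eq_fc, fc_sub]
    apply fc_norm_le _ _ _ (by linarith)
    intro i
    have := hp _ (hfmem i)
    rw [abs_sub_comm]
    exact le_of_lt this
  have hC : ‖(Polynomial.aeval (Tof f.1) p :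
      EuclideanSpace ℝ (Fin n) →L[ℝ] EuclideanSpace ℝ (Fin n)) -
      (Polynomial.aeval (Tof f₀.1) p :
      EuclideanSpace ℝ (Fin n) →L[ℝ] EuclideanSpace ℝ (Fin n))‖ < ε/4 := by
    have := hδ₂ hdf₂
    rwa [dist_eq_norm] at this
  have hD : ‖(Polynomial.aeval (Tof f₀.1) p :
      EuclideanSpace ℝ (Fin n) →L[ℝ] EuclideanSpace ℝ (Fin n)) - fc φt₀ f₀.1‖ ≤ ε/4 := by
    rw [aeval_eq_fc, fc_sub]
    apply fc_norm_le _ _ _ (by linarith)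
    intro i
    exact le_of_lt (hp _ (hf₀mem i))
  rw [dist_eq_norm]
  calc ‖fc φt f.1 - fc φt₀ f₀.1‖
      ≤ ‖fc φt f.1 - fc φt₀ f.1‖ + ‖fc φt₀ f.1 - (Polynomial.aeval (Tof f.1) p :
          EuclideanSpace ℝ (Fin n) →L[ℝ] EuclideanSpace ℝ (Fin n))‖ +
        ‖(Polynomial.aeval (Tof f.1) p :
          EuclideanSpace ℝ (Fin n) →L[ℝ] EuclideanSpace ℝ (Fin n)) -
         (Polynomial.aeval (Tof f₀.1) p :
          EuclideanSpace ℝ (Fin n) →L[ℝ] EuclideanSpace ℝ (Fin n))‖ +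
        ‖(Polynomial.aeval (Tof f₀.1) p :
          EuclideanSpace ℝ (Fin n) →L[ℝ] EuclideanSpace ℝ (Fin n)) - fc φt₀ f₀.1‖ :=
        four_triangle _ _ _ _ _
    _ < ε := by linarith

end Stmt13

open Stmt13

/-- The maps f ↦ f (f*f)^{-t/2}, t ∈ [0,1], form a continuous deformation
retraction of the space Inj(ℝⁿ, ℝᵐ) of injective linear maps onto the subspace of
isometric injections, fixing the isometric injections, and equivariant under O(n) × O(m)
acting by pre- and post-composition.  The operator (f*f)^{-t/2} is characterized on each
eigenvector of f*f with eigenvalue μ as multiplication by μ^{-t/2}. -/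
theorem stmt13 (n m : ℕ) :
    ∃ H : {f : EuclideanSpace ℝ (Fin n) →L[ℝ] EuclideanSpace ℝ (Fin m) //
          Function.Injective f} × unitInterval →
        (EuclideanSpace ℝ (Fin n) →L[ℝ] EuclideanSpace ℝ (Fin m)),
      Continuous H ∧
      (∀ f t, Function.Injective (H (f, t))) ∧
      (∀ f, H (f, 0) = f.1) ∧
      (∀ f v, ‖H (f, 1) v‖ = ‖v‖) ∧
      (∀ f, (∀ v, ‖f.1 v‖ = ‖v‖) → ∀ t, H (f, t) = f.1) ∧
      (∀ f t, ∃ g : EuclideanSpace ℝ (Fin n) →L[ℝ] EuclideanSpace ℝ (Fin n),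
        H (f, t) = f.1.comp g ∧
        ∀ (v : EuclideanSpace ℝ (Fin n)) (μ : ℝ),
          ((ContinuousLinearMap.adjoint f.1).comp f.1) v = μ • v →
            g v = (μ ^ (-(t : ℝ) / 2)) • v) ∧
      (∀ (a : EuclideanSpace ℝ (Fin n) ≃ₗᵢ[ℝ] EuclideanSpace ℝ (Fin n))
         (b : EuclideanSpace ℝ (Fin m) ≃ₗᵢ[ℝ] EuclideanSpace ℝ (Fin m))
         (f f' : {f : EuclideanSpace ℝ (Fin n) →L[ℝ] EuclideanSpace ℝ (Fin m) //
            Function.Injective f}),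
        (∀ v, f'.1 v = b (f.1 (a v))) →
          ∀ t v, H (f', t) v = b (H (f, t) (a v))) := by
  refine ⟨fun p => p.1.1.comp (fc (fun μ => μ ^ (-(p.2 : ℝ) / 2)) p.1.1),
    ?_, ?_, ?_, ?_, ?_, ?_, ?_⟩
  · exact (continuous_subtype_val.comp continuous_fst).clm_comp g_cont
  · -- injectivity
    intro f t
    have hinj : Function.Injective (fc (fun μ => μ ^ (-(t:ℝ)/2)) f.1) := by
      intro x y hxy
      have h0 : fc (fun μ => μ ^ (-(t:ℝ)/2)) f.1 (x - y) = 0 := by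
        rw [map_sub, hxy, sub_self]
      have hreprz : (eb f.1).repr (x - y) = 0 := by
        ext i
        have h1 := congrArg (fun z => (eb f.1).repr z i) h0
        simp only [map_zero] at h1
        rw [repr_fc] at h1
        have hne : (ev f.1 i) ^ (-(t:ℝ)/2) ≠ 0 :=
          (Real.rpow_pos_of_pos (ev_pos f.1 f.2 i) _).ne'
        have := (mul_eq_zero.mp h1).resolve_left hne
        simpa using this
      have : x - y = 0 := by
        apply (eb f.1).repr.injective
        rw [hreprz, map_zero]
      exact sub_eq_zero.mp this
    exact f.2.comp hinj
  · -- t = 0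
    intro f
    have hid : ContinuousLinearMap.id ℝ (EuclideanSpace ℝ (Fin n)) =
        fc (fun μ => μ ^ (-((0:unitInterval):ℝ)/2)) f.1 := by
      apply fc_unique
      intro i
      have : ((0:unitInterval):ℝ) = 0 := rfl
      simp [this, Real.rpow_zero]
    show (f.1).comp (fc (fun μ => μ ^ (-((0:unitInterval):ℝ)/2)) f.1) = f.1
    rw [← hid, ContinuousLinearMap.comp_id]
  · -- t = 1 : isometry
    intro f v
    have h1 : ((1:unitInterval):ℝ) = 1 := rfl
    set g := fc (fun μ => μ ^ (-((1:unitInterval):ℝ)/2)) f.1 with hg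
    show ‖f.1 (g v)‖ = ‖v‖
    have key : (inner ℝ (f.1 (g v)) (f.1 (g v)) : ℝ) = inner ℝ v v := by
      rw [← Tof_inner, inner_coords f.1, inner_coords f.1 v v]
      refine Finset.sum_congr rfl fun i _ => ?_
      rw [repr_Tof, hg, repr_fc]
      have hev := ev_pos f.1 f.2 i
      have hφ : (ev f.1 i) ^ (-((1:unitInterval):ℝ)/2) * (ev f.1 i) ^ (-((1:unitInterval):ℝ)/2)
          = (ev f.1 i)⁻¹ := by
        rw [← Real.rpow_add hev, h1]
        norm_num [Real.rpow_neg_one]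
      have hcancel : ev f.1 i * ((ev f.1 i) ^ (-((1:unitInterval):ℝ)/2) *
          (ev f.1 i) ^ (-((1:unitInterval):ℝ)/2)) = 1 := by
        rw [hφ, mul_inv_cancel₀ hev.ne']
      calc ev f.1 i * ((ev f.1 i) ^ (-((1:unitInterval):ℝ)/2) * (eb f.1).repr v i) *
            ((ev f.1 i) ^ (-((1:unitInterval):ℝ)/2) * (eb f.1).repr v i)
          = (ev f.1 i * ((ev f.1 i) ^ (-((1:unitInterval):ℝ)/2) *
              (ev f.1 i) ^ (-((1:unitInterval):ℝ)/2))) *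
            ((eb f.1).repr v i * (eb f.1).repr v i) := by ring
        _ = (eb f.1).repr v i * (eb f.1).repr v i := by rw [hcancel, one_mul]
    rw [real_inner_self_eq_norm_sq, real_inner_self_eq_norm_sq] at key
    have := congrArg Real.sqrt key
    rwa [Real.sqrt_sq (norm_nonneg _), Real.sqrt_sq (norm_nonneg _)] at this
  · -- isometries are fixed
    intro f hf t
    have hT : ∀ v, Tof f.1 v = (1:ℝ) • v := by
      intro v
      apply ext_inner_right ℝ
      intro w
      rw [Tof_inner]
      have li : (inner ℝ (f.1 v) (f.1 w) : ℝ) = inner ℝ v w :=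
        (LinearIsometry.mk (f.1 : EuclideanSpace ℝ (Fin n) →ₗ[ℝ] EuclideanSpace ℝ (Fin m)) hf).inner_map_map v w
      rw [li, one_smul]
    have hfc : ∀ v, fc (fun μ => μ ^ (-(t:ℝ)/2)) f.1 v = v := by
      intro v
      rw [fc_eig _ _ (hT v), Real.one_rpow, one_smul]
    ext v
    simp [hfc v]
  · -- existence of g with eigenvector property
    intro f t
    exact ⟨fc (fun μ => μ ^ (-(t:ℝ)/2)) f.1, rfl, fun v μ h => fc_eig _ _ h⟩
  · -- equivariance
    intro a b f f' hff' t v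
    set φ : ℝ → ℝ := fun μ => μ ^ (-(t:ℝ)/2) with hφdef
    have key : ∀ (w : EuclideanSpace ℝ (Fin n)) (μ : ℝ),
        Tof f'.1 w = μ • w → Tof f.1 (a w) = μ • (a w) := by
      intro w μ hw
      apply ext_inner_right ℝ
      intro u
      rw [Tof_inner]
      have e1 : (inner ℝ (f.1 (a w)) (f.1 u) : ℝ) = inner ℝ (Tof f'.1 w) (a.symm u) := by
        rw [Tof_inner, hff' w, hff' (a.symm u), a.apply_symm_apply,
          b.inner_map_map]
      have e2 : (inner ℝ (Tof f'.1 w) (a.symm u) : ℝ) = μ * inner ℝ (a w) u := by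
        rw [hw, real_inner_smul_left]
        congr 1
        have := a.inner_map_map w (a.symm u)
        rw [a.apply_symm_apply] at this
        exact this.symm
      rw [e1, e2, real_inner_smul_left]
    set G : EuclideanSpace ℝ (Fin n) →L[ℝ] EuclideanSpace ℝ (Fin n) :=
      (a.symm.toLinearIsometry.toContinuousLinearMap).comp
        ((fc φ f.1).comp a.toLinearIsometry.toContinuousLinearMap) with hGdef
    have hG : ∀ i, G (eb f'.1 i) = φ (ev f'.1 i) • eb f'.1 i := by
      intro i
      have h1 := key _ _ (Tof_basis f'.1 i)
      simp only [hGdef, ContinuousLinearMap.comp_apply,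
        LinearIsometry.coe_toContinuousLinearMap, LinearIsometryEquiv.coe_toLinearIsometry]
      rw [fc_eig _ _ h1, map_smul, a.symm_apply_apply]
    have hGeq := fc_unique φ f'.1 G hG
    show f'.1 (fc φ f'.1 v) = b (f.1 (fc φ f.1 (a v)))
    rw [← hGeq]
    simp only [hGdef, ContinuousLinearMap.comp_apply,
      LinearIsometry.coe_toContinuousLinearMap, LinearIsometryEquiv.coe_toLinearIsometry]
    rw [hff' (a.symm (fc φ f.1 (a v))), a.apply_symm_apply]
end
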